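/- Let P(r,n;A,D,Γ) be a regular pentad of Cartan type, i.e. C(A,D,Γ) = Γ·ᵗD·A·D is invertible (so necessarily n ≤ r and rank D = n). Then: the elements h₁,…,h_n ∈ ℂ^r are linearly independent; the restriction of B_A to span{h₁,…,h_n} is nondegenerate; and ℂ^r decomposes as the direct sum ℂ^r = Ann ℂ_D^Γ ⊕ span{h₁,…,h_n}, where Ann ℂ_D^Γ has dimension r − n and is the B_A-orthogonal complement of span{h₁,…,h_n}. -/

import Mathlib

noncomputable section

open Matrix

/-- The representation `□_D^r` of the abelian Lie algebra `ℂ^r` on `ℂ_D^Γ = ℂⁿ`: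
`□_D^r(ε_i ⊗ e_j) = d_{ij} e_j`. -/
def boxD {r n : ℕ} (D : Matrix (Fin r) (Fin n) ℂ) (a : Fin r → ℂ) (v : Fin n → ℂ) :
    Fin n → ℂ :=
  fun j => (∑ i, a i * D i j) * v j

/-- The representation `□_{-D}^r` of `ℂ^r` on `ℂ_{-D}^Γ = ℂⁿ`:
`□_{-D}^r(ε_i ⊗ f_j) = -d_{ij} f_j`. -/
def boxNegD {r n : ℕ} (D : Matrix (Fin r) (Fin n) ℂ) (a : Fin r → ℂ) (φ : Fin n → ℂ) :
    Fin n → ℂ :=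
  fun j => -((∑ i, a i * D i j) * φ j)

/-- The pairing `⟨e_i, f_j⟩_D^Γ = δ_{ij} γ_i`. -/
def pairG {n : ℕ} (γ : Fin n → ℂ) (v φ : Fin n → ℂ) : ℂ :=
  ∑ j, γ j * (v j * φ j)

/-- The bilinear form `B_A(x, y) = ᵗx · ᵗA⁻¹ · y` on `ℂ^r`. -/
def bilinA {r : ℕ} (A : Matrix (Fin r) (Fin r) ℂ) (x y : Fin r → ℂ) : ℂ :=
  x ⬝ᵥ ((A⁻¹)ᵀ *ᵥ y)

/-- `h_i`, the `i`-th column of `ᵗA · D · Γ`. -/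
def hvec {r n : ℕ} (A : Matrix (Fin r) (Fin r) ℂ) (D : Matrix (Fin r) (Fin n) ℂ)
    (γ : Fin n → ℂ) (i : Fin n) : Fin r → ℂ :=
  fun k => (Aᵀ * D * Matrix.diagonal γ) k i

/-- The Cartan matrix `C(A, D, Γ) = Γ · ᵗD · A · D` of the pentad of Cartan type
`P(r, n; A, D, Γ)`. -/
def cartanC {r n : ℕ} (A : Matrix (Fin r) (Fin r) ℂ) (D : Matrix (Fin r) (Fin n) ℂ)
    (γ : Fin n → ℂ) : Matrix (Fin n) (Fin n) ℂ :=
  Matrix.diagonal γ * Dᵀ * A * D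

/-- The permutation matrix `E_π = (δ_{j, π i})_{ij}`. -/
def permMat {n : ℕ} (π : Equiv.Perm (Fin n)) : Matrix (Fin n) (Fin n) ℂ :=
  fun i j => if j = π i then 1 else 0

/-- The annihilator `Ann ℂ_D^Γ = {a ∈ ℂ^r : □_D^r(a ⊗ v) = 0 for all v}`. -/
def annD {r n : ℕ} (D : Matrix (Fin r) (Fin n) ℂ) : Submodule ℂ (Fin r → ℂ) where
  carrier := {a | ∀ v, boxD D a v = 0}
  add_mem' := by
    intro a b ha hb v
    funext j
    have h1 := congrFun (ha v) j
    have h2 := congrFun (hb v) j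
    simp only [boxD, Pi.zero_apply] at h1 h2 ⊢
    simp only [Pi.add_apply, add_mul, Finset.sum_add_distrib]
    rw [h1, h2, add_zero]
  zero_mem' := by
    intro v
    funext j
    simp [boxD]
  smul_mem' := by
    intro c a ha v
    funext j
    have h := congrFun (ha v) j
    simp only [boxD, Pi.zero_apply] at h ⊢
    have hsum : ∑ i, (c • a) i * D i j = c * ∑ i, a i * D i j := by
      rw [Finset.mul_sum]
      refine Finset.sum_congr rfl fun i _ => ?_
      simp [mul_assoc]
    rw [hsum, mul_assoc, h, mul_zero]


/-- Auxiliary: pulling a `mulVec` out of the left slot of a dot product. -/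
lemma mulVec_dot_aux {r n : ℕ} (M : Matrix (Fin r) (Fin n) ℂ) (c : Fin n → ℂ)
    (z : Fin r → ℂ) : (M *ᵥ c) ⬝ᵥ z = c ⬝ᵥ (Mᵀ *ᵥ z) := by
  rw [dotProduct_comm, Matrix.mulVec_transpose, Matrix.dotProduct_mulVec, dotProduct_comm]

/-- For a regular pentad of Cartan type (`C(A,D,Γ)` invertible):
`n ≤ r`, `rank D = n`, the `h_i` are linearly independent, `B_A` restricted to
`span{h₁,…,h_n}` is nondegenerate, and `ℂ^r = Ann ℂ_D^Γ ⊕ span{h₁,…,h_n}` with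
`Ann ℂ_D^Γ` of dimension `r − n` equal to the `B_A`-orthogonal of the span. -/
theorem stmt_13 (r n : ℕ) (hr : 0 < r) (hn : 0 < n)
    (A : Matrix (Fin r) (Fin r) ℂ) (hA : IsUnit A.det)
    (D : Matrix (Fin r) (Fin n) ℂ)
    (γ : Fin n → ℂ) (hγ : ∀ j, γ j ≠ 0)
    (hreg : IsUnit (cartanC A D γ).det) :
    n ≤ r ∧ D.rank = n ∧
    LinearIndependent ℂ (hvec A D γ) ∧
    (∀ x ∈ Submodule.span ℂ (Set.range (hvec A D γ)),
      (∀ y ∈ Submodule.span ℂ (Set.range (hvec A D γ)), bilinA A x y = 0) → x = 0) ∧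
    (∀ y ∈ Submodule.span ℂ (Set.range (hvec A D γ)),
      (∀ x ∈ Submodule.span ℂ (Set.range (hvec A D γ)), bilinA A x y = 0) → y = 0) ∧
    annD D ⊓ Submodule.span ℂ (Set.range (hvec A D γ)) = ⊥ ∧
    annD D ⊔ Submodule.span ℂ (Set.range (hvec A D γ)) = ⊤ ∧
    Module.finrank ℂ ↥(annD D) = r - n ∧
    (annD D : Set (Fin r → ℂ))
      = {a : Fin r → ℂ | ∀ y ∈ Submodule.span ℂ (Set.range (hvec A D γ)), bilinA A a y = 0} := by
  classical
  set M : Matrix (Fin r) (Fin n) ℂ := Aᵀ * D * Matrix.diagonal γ with hM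
  set C : Matrix (Fin n) (Fin n) ℂ := cartanC A D γ with hC
  -- basic inverse facts
  have hAinv : (A⁻¹)ᵀ * Aᵀ = 1 := by
    rw [← Matrix.transpose_mul, Matrix.mul_nonsing_inv A hA, Matrix.transpose_one]
  have hkey : ∀ (X : Matrix (Fin r) (Fin n) ℂ), (A⁻¹)ᵀ * (Aᵀ * X) = X := fun X => by
    rw [← Matrix.mul_assoc, hAinv, Matrix.one_mul]
  have hAM : (A⁻¹)ᵀ * M = D * Matrix.diagonal γ := by
    rw [hM, Matrix.mul_assoc Aᵀ, hkey]
  have hgram : Mᵀ * ((A⁻¹)ᵀ * M) = C * Matrix.diagonal γ := by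
    rw [hAM, hM, hC]
    simp only [cartanC, Matrix.transpose_mul, Matrix.transpose_transpose,
      Matrix.diagonal_transpose, Matrix.mul_assoc]
  -- hvec is the transpose of M
  have hhv : hvec A D γ = Mᵀ := rfl
  have hspan : Submodule.span ℂ (Set.range (hvec A D γ)) = LinearMap.range M.mulVecLin := by
    rw [hhv, Matrix.range_mulVecLin]
    rfl
  -- CΓ is invertible
  have hprod : IsUnit (∏ j, γ j) := IsUnit.mk0 _ (Finset.prod_ne_zero_iff.mpr fun j _ => hγ j)
  have hCG : IsUnit (C * Matrix.diagonal γ).det := by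
    rw [Matrix.det_mul, Matrix.det_diagonal]
    exact hreg.mul hprod
  have hCGinj : Function.Injective (C * Matrix.diagonal γ).mulVec :=
    Matrix.mulVec_injective_iff_isUnit.mpr ((Matrix.isUnit_iff_isUnit_det _).mpr hCG)
  have hCGTinj : Function.Injective ((C * Matrix.diagonal γ)ᵀ).mulVec :=
    Matrix.mulVec_injective_iff_isUnit.mpr ((Matrix.isUnit_iff_isUnit_det _).mpr
      (by rwa [Matrix.det_transpose]))
  have hCinj : Function.Injective C.mulVec :=
    Matrix.mulVec_injective_iff_isUnit.mpr ((Matrix.isUnit_iff_isUnit_det _).mpr hreg)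
  -- injectivity of D
  have hDzero : ∀ x : Fin n → ℂ, D *ᵥ x = 0 → x = 0 := by
    intro x hx
    have h1 : C *ᵥ x = C *ᵥ 0 := by
      rw [hC]
      show (Matrix.diagonal γ * Dᵀ * A * D) *ᵥ x = _
      rw [← Matrix.mulVec_mulVec, hx]
      simp
    simpa using hCinj h1
  have hDker : LinearMap.ker D.mulVecLin = ⊥ := by
    rw [LinearMap.ker_eq_bot']
    intro x hx
    exact hDzero x (by simpa [Matrix.mulVecLin_apply] using hx)
  have hrankD : D.rank = n := by
    have := LinearMap.finrank_range_add_finrank_ker D.mulVecLin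
    rw [hDker, finrank_bot, add_zero, Module.finrank_fin_fun] at this
    exact this
  have hnr : n ≤ r := hrankD ▸ D.rank_le_height
  -- sums of hvec's are mulVecs
  have hsum : ∀ c : Fin n → ℂ, ∑ i, c i • hvec A D γ i = M *ᵥ c := by
    intro c
    funext k
    simp only [Finset.sum_apply, Pi.smul_apply, smul_eq_mul, hhv, Matrix.transpose_apply,
      Matrix.mulVec, dotProduct]
    exact Finset.sum_congr rfl fun i _ => mul_comm _ _
  -- bilinear form computations
  have hbil2 : ∀ (a : Fin r → ℂ) (d : Fin n → ℂ),
      bilinA A a (M *ᵥ d) = (a ᵥ* (D * Matrix.diagonal γ)) ⬝ᵥ d := by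
    intro a d
    rw [bilinA, Matrix.mulVec_mulVec, hAM, Matrix.dotProduct_mulVec]
  have hbil : ∀ c d : Fin n → ℂ,
      bilinA A (M *ᵥ c) (M *ᵥ d) = c ⬝ᵥ ((C * Matrix.diagonal γ) *ᵥ d) := by
    intro c d
    rw [bilinA, Matrix.mulVec_mulVec, mulVec_dot_aux, Matrix.mulVec_mulVec, hgram]
  -- hvec j = M *ᵥ single j 1
  have hvsingle : ∀ j, hvec A D γ j = M *ᵥ Pi.single j 1 := by
    intro j
    rw [Matrix.mulVec_single_one, hhv]
    rfl
  have hvmem : ∀ j, hvec A D γ j ∈ Submodule.span ℂ (Set.range (hvec A D γ)) :=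
    fun j => Submodule.subset_span (Set.mem_range_self j)
  -- linear independence
  have hli : LinearIndependent ℂ (hvec A D γ) := by
    rw [Fintype.linearIndependent_iff]
    intro c hcs
    have hMc : M *ᵥ c = 0 := by rw [← hsum]; exact hcs
    have h1 : (C * Matrix.diagonal γ) *ᵥ c = (C * Matrix.diagonal γ) *ᵥ 0 := by
      rw [← hgram, ← Matrix.mulVec_mulVec, ← Matrix.mulVec_mulVec, hMc]
      simp
    have := hCGinj h1
    intro i; rw [this]; rfl
  -- membership in span gives a preimage
  have hmem : ∀ x ∈ Submodule.span ℂ (Set.range (hvec A D γ)), ∃ c, M *ᵥ c = x := by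
    intro x hx
    rw [hspan] at hx
    obtain ⟨c, hc⟩ := hx
    exact ⟨c, by simpa [Matrix.mulVecLin_apply] using hc⟩
  -- nondegeneracy 1
  have hnd1 : ∀ x ∈ Submodule.span ℂ (Set.range (hvec A D γ)),
      (∀ y ∈ Submodule.span ℂ (Set.range (hvec A D γ)), bilinA A x y = 0) → x = 0 := by
    intro x hx hxy
    obtain ⟨c, rfl⟩ := hmem x hx
    have hc : (C * Matrix.diagonal γ)ᵀ *ᵥ c = 0 := by
      funext j'
      have := hxy _ (hvmem j')
      rw [hvsingle j', hbil c _, Matrix.mulVec_single] at this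
      rw [Matrix.mulVec_transpose]
      show c ⬝ᵥ (fun i => (C * Matrix.diagonal γ) i j') = 0
      simp only [MulOpposite.op_one, one_smul] at this
      exact this
    have hc0 : c = 0 := hCGTinj
      (show (C * Matrix.diagonal γ)ᵀ *ᵥ c = (C * Matrix.diagonal γ)ᵀ *ᵥ 0 by
        rw [hc]; simp)
    rw [hc0]; simp
  have hnd2 : ∀ y ∈ Submodule.span ℂ (Set.range (hvec A D γ)),
      (∀ x ∈ Submodule.span ℂ (Set.range (hvec A D γ)), bilinA A x y = 0) → y = 0 := by
    intro y hy hxy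
    obtain ⟨d, rfl⟩ := hmem y hy
    have hd : (C * Matrix.diagonal γ) *ᵥ d = 0 := by
      funext j
      have := hxy _ (hvmem j)
      rw [hvsingle j, hbil _ d] at this
      simpa [single_dotProduct] using this
    have hd0 : d = 0 := hCGinj
      (show (C * Matrix.diagonal γ) *ᵥ d = (C * Matrix.diagonal γ) *ᵥ 0 by rw [hd]; simp)
    rw [hd0]; simp
  -- annD is the kernel of Dᵀ
  have hann : ∀ a : Fin r → ℂ, a ∈ annD D ↔ Dᵀ *ᵥ a = 0 := by
    intro a
    constructor
    · intro h
      funext j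
      have := congrFun (h fun _ => 1) j
      simp only [boxD, mul_one, Pi.zero_apply] at this
      simp only [Matrix.mulVec, dotProduct, Matrix.transpose_apply, Pi.zero_apply]
      rw [← this]
      exact Finset.sum_congr rfl fun i _ => mul_comm _ _
    · intro h v
      funext j
      have hj : ∑ i, a i * D i j = 0 := by
        have := congrFun h j
        simp only [Matrix.mulVec, dotProduct, Matrix.transpose_apply,
          Pi.zero_apply] at this
        rw [← this]
        exact Finset.sum_congr rfl fun i _ => mul_comm _ _
      simp [boxD, hj]
  -- annD = B_A-orthogonal of span
  have horth : ∀ a : Fin r → ℂ, a ∈ annD D ↔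
      ∀ y ∈ Submodule.span ℂ (Set.range (hvec A D γ)), bilinA A a y = 0 := by
    intro a
    rw [hann]
    constructor
    · intro h y hy
      obtain ⟨d, rfl⟩ := hmem y hy
      have havD : a ᵥ* D = 0 := by rw [← Matrix.mulVec_transpose, h]
      rw [hbil2, ← Matrix.vecMul_vecMul, havD]
      simp
    · intro h
      have havD : ∀ j, (a ᵥ* D) j * γ j = 0 := by
        intro j
        have h0 : (a ᵥ* (D * Matrix.diagonal γ)) j = 0 := by
          have := h _ (hvmem j)
          rw [hvsingle j, hbil2] at this
          simpa [dotProduct_single] using this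
        rw [← Matrix.vecMul_vecMul, Matrix.vecMul_diagonal] at h0
        exact h0
      funext j
      rw [Matrix.mulVec_transpose]
      have := havD j
      rcases mul_eq_zero.mp this with h' | h'
      · exact h'
      · exact absurd h' (hγ j)
  -- finrank of annD
  have hannK : annD D = LinearMap.ker (Dᵀ).mulVecLin := by
    ext a
    rw [hann, LinearMap.mem_ker, Matrix.mulVecLin_apply]
  have hrankDT : (Dᵀ).rank = n := by rw [Matrix.rank_transpose, hrankD]
  have hfrank : Module.finrank ℂ ↥(annD D) = r - n := by
    have h1 := LinearMap.finrank_range_add_finrank_ker (Dᵀ).mulVecLin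
    rw [Module.finrank_fin_fun] at h1
    have h2 : Module.finrank ℂ ↥(LinearMap.range (Dᵀ).mulVecLin) = n := hrankDT
    rw [hannK]
    omega
  -- inf is ⊥
  have hinf : annD D ⊓ Submodule.span ℂ (Set.range (hvec A D γ)) = ⊥ := by
    rw [eq_bot_iff]
    intro x hx
    rcases hx with ⟨hx1, hx2⟩
    have := hnd1 x hx2 ((horth x).mp hx1)
    simpa using this
  -- sup is ⊤
  have hspanrank : Module.finrank ℂ
      ↥(Submodule.span ℂ (Set.range (hvec A D γ))) = n := by
    rw [finrank_span_eq_card hli, Fintype.card_fin]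
  have hsup : annD D ⊔ Submodule.span ℂ (Set.range (hvec A D γ)) = ⊤ := by
    apply Submodule.eq_top_of_finrank_eq
    have h1 := Submodule.finrank_sup_add_finrank_inf_eq (annD D)
      (Submodule.span ℂ (Set.range (hvec A D γ)))
    rw [hinf, finrank_bot, add_zero, hfrank, hspanrank] at h1
    rw [h1, Module.finrank_fin_fun]
    omega
  refine ⟨hnr, hrankD, hli, hnd1, hnd2, hinf, hsup, hfrank, ?_⟩
  ext a
  exact horth a

end
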